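/- arXiv:2112.08495 — 5 statements merged into one kernel-verified Lean document; each statement's English description precedes it below -/
import Mathlib

section
/- Suppose 0 < P(E=1) < 1 and E[τ(C) | E = 0] ≠ 0. Define the ratio score ψ = E[τ(C) | E=1] / E[τ(C) | E=0] and the difference score φ = E[τ(C) | E=1] − E[τ(C) | E=0]. Then ψ = (E[O·π(C)]/P(E=1)) / (E[O·(1 − π(C))]/P(E=0)) and φ = E[O·π(C)]/P(E=1) − E[O·(1 − π(C))]/P(E=0). (Lemma 1.) -/
open MeasureTheory ProbabilityTheory

private lemma aux_swap
    {Ω : Type*} [m0 : MeasurableSpace Ω] {P : Measure Ω} [IsProbabilityMeasure P]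
    {m : MeasurableSpace Ω} (hm : m ≤ m0)
    (O f g ind : Ω → ℝ)
    (hO : Integrable O P) (hfint : Integrable f P) (hind_int : Integrable ind P)
    (hf_m : StronglyMeasurable[m] f) (hg_m : StronglyMeasurable[m] g)
    (hf : f =ᵐ[P] P[O|m]) (hg : g =ᵐ[P] P[ind|m])
    (hg_bdd : ∀ ω, ‖g ω‖ ≤ 1) (hind_bdd : ∀ ω, ‖ind ω‖ ≤ 1)
    (hind_asm : AEStronglyMeasurable[m0] ind P) :
    ∫ ω, f ω * ind ω ∂P = ∫ ω, O ω * g ω ∂P := by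
  have hg_asm : AEStronglyMeasurable[m0] g P := (hg_m.mono hm).aestronglyMeasurable
  have hfind : Integrable (fun ω => f ω * ind ω) P := by
    have h := Integrable.bdd_mul hfint hind_asm (Filter.Eventually.of_forall hind_bdd)
    exact h.congr (Filter.Eventually.of_forall fun ω => mul_comm _ _)
  have hgO : Integrable (fun ω => g ω * O ω) P :=
    Integrable.bdd_mul hO hg_asm (Filter.Eventually.of_forall hg_bdd)
  have h1 : P[f * ind|m] =ᵐ[P] f * P[ind|m] :=
    condExp_mul_of_stronglyMeasurable_left hf_m hfind hind_int
  have h2 : P[g * O|m] =ᵐ[P] g * P[O|m] :=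
    condExp_mul_of_stronglyMeasurable_left hg_m hgO hO
  calc ∫ ω, f ω * ind ω ∂P
      = ∫ ω, (P[f * ind|m]) ω ∂P := (integral_condExp (μ := P) (f := f * ind) hm).symm
    _ = ∫ ω, f ω * (P[ind|m]) ω ∂P := integral_congr_ae h1
    _ = ∫ ω, g ω * (P[O|m]) ω ∂P := by
        refine integral_congr_ae ?_
        filter_upwards [hf, hg] with ω hfω hgω
        rw [← hgω, ← hfω, mul_comm]
    _ = ∫ ω, (P[g * O|m]) ω ∂P := (integral_congr_ae h2).symm
    _ = ∫ ω, g ω * O ω ∂P := integral_condExp (μ := P) (f := fun ω => g ω * O ω) hm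
    _ = ∫ ω, O ω * g ω ∂P := by simp_rw [mul_comm]

private lemma stmt2_main
    {Ω : Type*} [mΩ : MeasurableSpace Ω] {P : Measure Ω} [IsProbabilityMeasure P]
    (O Ee C : Ω → ℝ)
    (hO : Integrable O P) (hEe : Measurable Ee)
    (hEbin : ∀ ω, Ee ω = 0 ∨ Ee ω = 1)
    (τ π : ℝ → ℝ)
    (hπ01 : ∀ x, π x ∈ Set.Icc (0 : ℝ) 1)
    (hτint : Integrable (fun ω => τ (C ω)) P)
    (hm : MeasurableSpace.comap C inferInstance ≤ mΩ)
    (hτCm : Measurable[MeasurableSpace.comap C inferInstance] (fun ω => τ (C ω)))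
    (hπCm : Measurable[MeasurableSpace.comap C inferInstance] (fun ω => π (C ω)))
    (hτver : (fun ω => τ (C ω)) =ᵐ[P] P[O | MeasurableSpace.comap C inferInstance])
    (hπver : (fun ω => π (C ω)) =ᵐ[P]
      P[(fun ω => if Ee ω = 1 then (1 : ℝ) else 0) | MeasurableSpace.comap C inferInstance]) :
    (∫ ω in {ω | Ee ω = 1}, τ (C ω) ∂P) = ∫ ω, O ω * π (C ω) ∂P
    ∧ (∫ ω in {ω | Ee ω = 0}, τ (C ω) ∂P) = ∫ ω, O ω * (1 - π (C ω)) ∂P := by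
  have h1πCm : Measurable[MeasurableSpace.comap C inferInstance] (fun ω => 1 - π (C ω)) := by
    have : Measurable[MeasurableSpace.comap C inferInstance] (fun _ : Ω => (1 : ℝ)) := measurable_const
    exact this.sub hπCm
  have hE1 : MeasurableSet[mΩ] {ω | Ee ω = 1} := hEe (measurableSet_singleton 1)
  have hE0 : MeasurableSet[mΩ] {ω | Ee ω = 0} := hEe (measurableSet_singleton 0)
  set ind : Ω → ℝ := fun ω => if Ee ω = 1 then (1 : ℝ) else 0 with hind_def
  have hind_meas : Measurable[mΩ] ind := Measurable.ite hE1 measurable_const measurable_const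
  have hind_bdd : ∀ ω, ‖ind ω‖ ≤ 1 := by
    intro ω; simp only [hind_def]; split <;> simp
  have hind0_bdd : ∀ ω, ‖1 - ind ω‖ ≤ 1 := by
    intro ω; simp only [hind_def]; split <;> simp
  have hind_int : Integrable ind P := by
    have h := Integrable.bdd_mul (integrable_const (1 : ℝ))
      (hind_meas.aestronglyMeasurable : AEStronglyMeasurable ind P) (Filter.Eventually.of_forall hind_bdd)
    simpa using h
  have hind0_int : Integrable (fun ω => 1 - ind ω) P := (integrable_const 1).sub hind_int
  have hπC_bdd : ∀ ω, ‖π (C ω)‖ ≤ 1 := by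
    intro ω
    have h := hπ01 (C ω)
    rw [Real.norm_eq_abs, abs_le]
    exact ⟨by linarith [h.1], h.2⟩
  have h1πC_bdd : ∀ ω, ‖1 - π (C ω)‖ ≤ 1 := by
    intro ω
    have h := hπ01 (C ω)
    rw [Real.norm_eq_abs, abs_le]
    constructor <;> [linarith [h.2]; linarith [h.1]]
  have hπver0 : (fun ω => 1 - π (C ω)) =ᵐ[P] P[(fun ω => 1 - ind ω)|MeasurableSpace.comap C inferInstance] := by
    have hsub : P[(fun ω => 1 - ind ω)|MeasurableSpace.comap C inferInstance] =ᵐ[P]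
        P[(fun _ : Ω => (1 : ℝ))|MeasurableSpace.comap C inferInstance] - P[ind|MeasurableSpace.comap C inferInstance] :=
      condExp_sub (μ := P) (m := MeasurableSpace.comap C inferInstance) (integrable_const (1 : ℝ)) hind_int
    have hconst : P[(fun _ : Ω => (1 : ℝ))|MeasurableSpace.comap C inferInstance] = fun _ => (1 : ℝ) :=
      condExp_const (μ := P) hm (1 : ℝ)
    filter_upwards [hsub, hπver] with ω h1 h2
    rw [h1]
    simp only [Pi.sub_apply, hconst]
    rw [← h2]
  constructor
  · have hstep : (∫ ω in {ω | Ee ω = 1}, τ (C ω) ∂P) = ∫ ω, τ (C ω) * ind ω ∂P := by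
      rw [← integral_indicator (μ := P) hE1]
      congr 1
      ext ω
      by_cases h : Ee ω = 1 <;> simp [Set.indicator_apply, hind_def, h]
    rw [hstep]
    exact aux_swap hm O (fun ω => τ (C ω)) (fun ω => π (C ω)) ind hO hτint hind_int
      hτCm.stronglyMeasurable hπCm.stronglyMeasurable hτver hπver hπC_bdd hind_bdd
      (hind_meas.aestronglyMeasurable : AEStronglyMeasurable ind P)
  · have hstep : (∫ ω in {ω | Ee ω = 0}, τ (C ω) ∂P) = ∫ ω, τ (C ω) * (1 - ind ω) ∂P := by
      rw [← integral_indicator (μ := P) hE0]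
      congr 1
      ext ω
      rcases hEbin ω with h | h <;> simp [Set.indicator_apply, hind_def, h]
    rw [hstep]
    exact aux_swap hm O (fun ω => τ (C ω)) (fun ω => 1 - π (C ω)) (fun ω => 1 - ind ω)
      hO hτint hind0_int hτCm.stronglyMeasurable h1πCm.stronglyMeasurable hτver hπver0
      h1πC_bdd hind0_bdd (hind0_int.aestronglyMeasurable : AEStronglyMeasurable (fun ω => 1 - ind ω) P)

/-- **Lemma 1.** If `0 < P(E=1) < 1` and `E[τ(C) | E = 0] ≠ 0`, then the ratio score
`ψ = E[τ(C)|E=1] / E[τ(C)|E=0]` equals `(E[O·π(C)]/P(E=1)) / (E[O·(1−π(C))]/P(E=0))`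
and the difference score `φ = E[τ(C)|E=1] − E[τ(C)|E=0]` equals
`E[O·π(C)]/P(E=1) − E[O·(1−π(C))]/P(E=0)`. -/
theorem stmt2
    {Ω : Type*} [MeasurableSpace Ω] {P : Measure Ω} [IsProbabilityMeasure P]
    (O Ee C : Ω → ℝ)
    (hO : Integrable O P) (hEe : Measurable Ee) (hC : Measurable C)
    (hEbin : ∀ ω, Ee ω = 0 ∨ Ee ω = 1)
    (τ π : ℝ → ℝ) (hτm : Measurable τ) (hπm : Measurable π)
    (hπ01 : ∀ x, π x ∈ Set.Icc (0 : ℝ) 1)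
    (hτint : Integrable (fun ω => τ (C ω)) P)
    (hτver : (fun ω => τ (C ω)) =ᵐ[P] P[O | MeasurableSpace.comap C inferInstance])
    (hπver : (fun ω => π (C ω)) =ᵐ[P]
      P[(fun ω => if Ee ω = 1 then (1 : ℝ) else 0) | MeasurableSpace.comap C inferInstance])
    (hpos : 0 < P {ω | Ee ω = 1}) (hlt : P {ω | Ee ω = 1} < 1)
    (hden : (∫ ω in {ω | Ee ω = 0}, τ (C ω) ∂P) / (P {ω | Ee ω = 0}).toReal ≠ 0) :
    ((∫ ω in {ω | Ee ω = 1}, τ (C ω) ∂P) / (P {ω | Ee ω = 1}).toReal)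
        / ((∫ ω in {ω | Ee ω = 0}, τ (C ω) ∂P) / (P {ω | Ee ω = 0}).toReal)
      = ((∫ ω, O ω * π (C ω) ∂P) / (P {ω | Ee ω = 1}).toReal)
        / ((∫ ω, O ω * (1 - π (C ω)) ∂P) / (P {ω | Ee ω = 0}).toReal)
    ∧ ((∫ ω in {ω | Ee ω = 1}, τ (C ω) ∂P) / (P {ω | Ee ω = 1}).toReal)
        - ((∫ ω in {ω | Ee ω = 0}, τ (C ω) ∂P) / (P {ω | Ee ω = 0}).toReal)
      = ((∫ ω, O ω * π (C ω) ∂P) / (P {ω | Ee ω = 1}).toReal)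
        - ((∫ ω, O ω * (1 - π (C ω)) ∂P) / (P {ω | Ee ω = 0}).toReal) := by
  obtain ⟨key1, key0⟩ := stmt2_main O Ee C hO hEe hEbin τ π hπ01 hτint hC.comap_le
    (fun s hs => ⟨τ ⁻¹' s, hτm hs, rfl⟩) (fun s hs => ⟨π ⁻¹' s, hπm hs, rfl⟩) hτver hπver
  rw [key1, key0]
  exact ⟨rfl, rfl⟩
end

section
/- In the linear data generating mechanism of Section 2.3, P(E=1) = 1/2, and for every j ∈ {1,…,p} the difference score φ_j := E[τ_j(C_j) | E = 1] − E[τ_j(C_j) | E = 0], where τ_j(C_j) is a version of E[O ∣ σ(C_j)] and E[X | E = e] denotes E[X·1_{E=e}]/P(E=e), satisfies φ_j = (α_j/3)·(β_j + θ·α_j). -/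
open MeasureTheory ProbabilityTheory

section AuxStmt7

variable {Ω : Type*}

private lemma aux7_bdd_mul {m0 : MeasurableSpace Ω} {P : Measure Ω} {f b : Ω → ℝ}
    (hf : Integrable f P) (hb : AEStronglyMeasurable b P) {c : ℝ}
    (hc : ∀ᵐ ω ∂P, |b ω| ≤ c) : Integrable (fun ω => b ω * f ω) P := by
  refine (hf.norm.const_mul c).mono' (hb.mul hf.aestronglyMeasurable) ?_
  filter_upwards [hc] with ω hω
  calc ‖b ω * f ω‖ = |b ω| * ‖f ω‖ := by
        rw [Real.norm_eq_abs, Real.norm_eq_abs, abs_mul]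
    _ ≤ c * ‖f ω‖ := mul_le_mul_of_nonneg_right hω (norm_nonneg _)

private lemma aux7_pullout {m m0 : MeasurableSpace Ω} {P : Measure Ω} [IsProbabilityMeasure P]
    (hm : m ≤ m0) {g f : Ω → ℝ} (hg : StronglyMeasurable[m] g)
    (hgf : Integrable (fun ω => g ω * f ω) P) (hf : Integrable f P) :
    ∫ ω, g ω * f ω ∂P = ∫ ω, g ω * (P[f|m]) ω ∂P := by
  have h := condExp_mul_of_stronglyMeasurable_left hg (show Integrable (g * f) P from hgf) hf
  calc ∫ ω, g ω * f ω ∂P = ∫ ω, (P[g * f|m]) ω ∂P := (integral_condExp hm).symm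
    _ = ∫ ω, g ω * (P[f|m]) ω ∂P := integral_congr_ae h

private lemma aux7_unif_moment {m0 : MeasurableSpace Ω} {P : Measure Ω} {X : Ω → ℝ}
    (hX : Measurable X) (hu : Measure.map X P = volume.restrict (Set.Icc (0:ℝ) 1))
    {g : ℝ → ℝ} (hg : Measurable g) :
    ∫ ω, g (X ω) ∂P = ∫ x in Set.Icc (0:ℝ) 1, g x := by
  rw [← hu, integral_map hX.aemeasurable hg.aestronglyMeasurable]

private lemma aux7_icc_id : ∫ x in Set.Icc (0:ℝ) 1, x = 1/2 := by
  rw [MeasureTheory.integral_Icc_eq_integral_Ioc,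
    ← intervalIntegral.integral_of_le (zero_le_one)]
  rw [integral_id]; norm_num

private lemma aux7_icc_sq : ∫ x in Set.Icc (0:ℝ) 1, x * x = 1/3 := by
  rw [MeasureTheory.integral_Icc_eq_integral_Ioc,
    ← intervalIntegral.integral_of_le (zero_le_one)]
  have : ∀ x : ℝ, x * x = x ^ 2 := fun x => (sq x).symm
  simp_rw [this]
  rw [integral_pow]
  norm_num

private lemma aux7_sum_split {p : ℕ} (j : Fin p) (f : Fin p → ℝ) :
    ∑ k, f k = f j + ∑ k ∈ Finset.univ.erase j, f k :=
  (Finset.add_sum_erase _ f (Finset.mem_univ j)).symm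

end AuxStmt7

/-- **Difference score in the linear data generating mechanism of Section 2.3.**
Under the linear DGM, `P(E=1) = 1/2`, and for every `j` the difference score
`φ_j = E[τ_j(C_j) | E=1] − E[τ_j(C_j) | E=0]` (with `τ_j(C_j)` a version of `E[O ∣ σ(C_j)]`)
equals `(α_j/3)(β_j + θ α_j)`. -/
theorem stmt7
    {Ω : Type*} [MeasurableSpace Ω] {P : Measure Ω} [IsProbabilityMeasure P]
    {p : ℕ} (C : Fin p → Ω → ℝ) (hCm : ∀ k, Measurable (C k))
    (hCindep : iIndepFun C P)
    (hCunif : ∀ k, Measure.map (C k) P = volume.restrict (Set.Icc (0 : ℝ) 1))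
    (Ee : Ω → ℝ) (hEe : Measurable Ee) (hEbin : ∀ ω, Ee ω = 0 ∨ Ee ω = 1)
    (α : Fin p → ℝ) (hα : ∀ k, 0 < α k) (hαsum : ∑ k, α k = 1)
    (hps : P[(fun ω => if Ee ω = 1 then (1 : ℝ) else 0) |
        MeasurableSpace.comap (fun ω (k : Fin p) => C k ω) inferInstance]
      =ᵐ[P] fun ω => ∑ k, α k * C k ω)
    (O : Ω → ℝ) (hO : Integrable O P)
    (β₀ θ : ℝ) (β : Fin p → ℝ)
    (hom : P[O | MeasurableSpace.comap (fun ω => (Ee ω, fun k : Fin p => C k ω)) inferInstance]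
      =ᵐ[P] fun ω => β₀ + θ * Ee ω + ∑ k, β k * C k ω) :
    P {ω | Ee ω = 1} = 1 / 2
    ∧ ∀ (j : Fin p) (τj : ℝ → ℝ), Measurable τj →
        Integrable (fun ω => τj (C j ω)) P →
        (fun ω => τj (C j ω)) =ᵐ[P] P[O | MeasurableSpace.comap (C j) inferInstance] →
        (∫ ω in {ω | Ee ω = 1}, τj (C j ω) ∂P) / (P {ω | Ee ω = 1}).toReal
          - (∫ ω in {ω | Ee ω = 0}, τj (C j ω) ∂P) / (P {ω | Ee ω = 0}).toReal
        = α j / 3 * (β j + θ * α j) := by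
  classical
  -- the indicator in `hps` is `Ee` itself
  have hEδ : (fun ω => if Ee ω = 1 then (1 : ℝ) else 0) = Ee := by
    funext ω; rcases hEbin ω with h | h <;> simp [h]
  rw [hEδ] at hps
  -- measurability facts at the ambient σ-algebra
  have hTm : Measurable (fun ω (k : Fin p) => C k ω) := measurable_pi_lambda _ hCm
  have hPairm : Measurable (fun ω => (Ee ω, fun k : Fin p => C k ω)) := hEe.prodMk hTm
  have hmC : MeasurableSpace.comap (fun ω (k : Fin p) => C k ω) inferInstance ≤ _ :=
    measurable_iff_comap_le.mp hTm
  have hmEC : MeasurableSpace.comap (fun ω => (Ee ω, fun k : Fin p => C k ω))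
      inferInstance ≤ _ := measurable_iff_comap_le.mp hPairm
  have hmj : ∀ j : Fin p, MeasurableSpace.comap (C j) inferInstance ≤ _ :=
    fun j => measurable_iff_comap_le.mp (hCm j)
  -- boundedness and integrability of the C k
  have hbd : ∀ k, ∀ᵐ ω ∂P, |C k ω| ≤ 1 := by
    intro k
    have h0 : P (C k ⁻¹' (Set.Icc (0:ℝ) 1)ᶜ) = 0 := by
      rw [← Measure.map_apply (hCm k) measurableSet_Icc.compl, hCunif k,
        Measure.restrict_apply measurableSet_Icc.compl]
      simp
    have hmem : ∀ᵐ ω ∂P, C k ω ∈ Set.Icc (0:ℝ) 1 := by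
      rw [ae_iff]
      exact h0
    filter_upwards [hmem] with ω hω
    rw [abs_le]; exact ⟨by linarith [hω.1], hω.2⟩
  have hCint : ∀ k, Integrable (C k) P := by
    intro k
    refine (integrable_const (1:ℝ)).mono' (hCm k).aestronglyMeasurable ?_
    filter_upwards [hbd k] with ω hω
    simpa [Real.norm_eq_abs] using hω
  have hEbd : ∀ᵐ ω ∂P, |Ee ω| ≤ 1 := by
    filter_upwards with ω
    rcases hEbin ω with h | h <;> simp [h]
  have hEint : Integrable Ee P := by
    refine (integrable_const (1:ℝ)).mono' hEe.aestronglyMeasurable ?_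
    filter_upwards [hEbd] with ω hω
    simpa [Real.norm_eq_abs] using hω
  -- first and second moments
  have hm1 : ∀ k, ∫ ω, C k ω ∂P = 1/2 := by
    intro k
    have h := aux7_unif_moment (hCm k) (hCunif k) (g := fun x => x) measurable_id
    simpa [aux7_icc_id] using h
  have hm2 : ∀ k, ∫ ω, C k ω * C k ω ∂P = 1/3 := by
    intro k
    have h := aux7_unif_moment (hCm k) (hCunif k) (g := fun x => x * x)
      (measurable_id.mul measurable_id)
    simpa [aux7_icc_sq] using h
  -- events
  have hs1 : MeasurableSet {ω | Ee ω = 1} := hEe (measurableSet_singleton 1)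
  have hs0 : MeasurableSet {ω | Ee ω = 0} := hEe (measurableSet_singleton 0)
  have hind1 : ∀ ω, Set.indicator {ω | Ee ω = 1} (fun _ => (1:ℝ)) ω = Ee ω := by
    intro ω
    rcases hEbin ω with h | h <;> simp [Set.indicator_apply, h]
  have hind0 : ∀ ω, Set.indicator {ω | Ee ω = 0} (fun _ => (1:ℝ)) ω = 1 - Ee ω := by
    intro ω
    rcases hEbin ω with h | h <;> simp [Set.indicator_apply, h]
  have hTmC : Measurable[MeasurableSpace.comap (fun ω (k : Fin p) => C k ω) inferInstance] (fun ω (k : Fin p) => C k ω) := measurable_iff_comap_le.mpr le_rfl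
  have hCmC : ∀ j, Measurable[MeasurableSpace.comap (fun ω (k : Fin p) => C k ω) inferInstance] (C j) := fun j => (measurable_pi_apply j).comp hTmC
  have hPairmEC : Measurable[MeasurableSpace.comap (fun ω => (Ee ω, fun k : Fin p => C k ω)) inferInstance] (fun ω => (Ee ω, fun k : Fin p => C k ω)) :=
    measurable_iff_comap_le.mpr le_rfl
  have hCmEC : ∀ j, Measurable[MeasurableSpace.comap (fun ω => (Ee ω, fun k : Fin p => C k ω)) inferInstance] (C j) :=
    fun j => (measurable_pi_apply j).comp (measurable_snd.comp hPairmEC)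
  -- mean of E
  have hmean : ∫ ω, Ee ω ∂P = 1/2 := by
    rw [← integral_condExp hmC (f := Ee), integral_congr_ae hps,
      integral_finset_sum _ (fun k _ => (hCint k).const_mul (α k))]
    simp_rw [integral_const_mul, hm1]
    rw [← Finset.sum_mul, hαsum, one_mul]
  have ht1 : (P {ω | Ee ω = 1}).toReal = 1/2 := by
    rw [← measureReal_def, ← integral_indicator_one hs1, ← hmean]
    exact integral_congr_ae (Filter.Eventually.of_forall hind1)
  have hP1 : P {ω | Ee ω = 1} = 1/2 := by
    have h := ENNReal.ofReal_toReal (measure_ne_top P {ω | Ee ω = 1})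
    rw [← h, ht1]
    rw [show (1:ℝ)/2 = (2:ℝ)⁻¹ by norm_num, ENNReal.ofReal_inv_of_pos two_pos]
    norm_num
  have ht0 : (P {ω | Ee ω = 0}).toReal = 1/2 := by
    have h2 : ∫ ω, Set.indicator {ω | Ee ω = 0} (fun _ => (1:ℝ)) ω ∂P = 1/2 := by
      calc ∫ ω, Set.indicator {ω | Ee ω = 0} (fun _ => (1:ℝ)) ω ∂P
          = ∫ ω, (1 - Ee ω) ∂P := integral_congr_ae (Filter.Eventually.of_forall hind0)
        _ = 1/2 := by
            rw [integral_sub (integrable_const 1) hEint, hmean]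
            norm_num
    rw [← measureReal_def, ← integral_indicator_one hs0]
    exact h2
  refine ⟨hP1, ?_⟩
  intro j τj hτm hτint hτae
  have hCjmj : Measurable[MeasurableSpace.comap (C j) inferInstance] (C j) :=
    measurable_iff_comap_le.mpr le_rfl
  set τC : Ω → ℝ := fun ω => τj (C j ω) with hτCdef
  have hτCmC : Measurable[MeasurableSpace.comap (fun ω (k : Fin p) => C k ω) inferInstance] τC := hτm.comp (hCmC j)
  -- integrabilities of products
  have int_τE : Integrable (fun ω => τC ω * Ee ω) P := by
    have h := aux7_bdd_mul hτint hEe.aestronglyMeasurable hEbd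
    exact h.congr (Filter.Eventually.of_forall fun ω => mul_comm _ _)
  have int_CE : ∀ k, Integrable (fun ω => C k ω * Ee ω) P := fun k =>
    aux7_bdd_mul hEint (hCm k).aestronglyMeasurable (hbd k)
  have int_CO : ∀ k, Integrable (fun ω => C k ω * O ω) P := fun k =>
    aux7_bdd_mul hO (hCm k).aestronglyMeasurable (hbd k)
  have int_Cτ : ∀ k, Integrable (fun ω => C k ω * τC ω) P := fun k =>
    aux7_bdd_mul hτint (hCm k).aestronglyMeasurable (hbd k)
  have int_CC : ∀ k l, Integrable (fun ω => C k ω * C l ω) P := fun k l =>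
    aux7_bdd_mul (hCint l) (hCm k).aestronglyMeasurable (hbd k)
  -- key substitution for E
  have keyE : ∀ g : Ω → ℝ, StronglyMeasurable[MeasurableSpace.comap (fun ω (k : Fin p) => C k ω) inferInstance] g → Integrable (fun ω => g ω * Ee ω) P →
      ∫ ω, g ω * Ee ω ∂P = ∫ ω, g ω * (∑ k, α k * C k ω) ∂P := by
    intro g hg hint
    rw [aux7_pullout hmC hg hint hEint]
    refine integral_congr_ae ?_
    filter_upwards [hps] with ω hω
    rw [hω]
  -- key substitution for O
  have keyO : ∀ g : Ω → ℝ, StronglyMeasurable[MeasurableSpace.comap (fun ω => (Ee ω, fun k : Fin p => C k ω)) inferInstance] g → Integrable (fun ω => g ω * O ω) P →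
      ∫ ω, g ω * O ω ∂P = ∫ ω, g ω * (β₀ + θ * Ee ω + ∑ k, β k * C k ω) ∂P := by
    intro g hg hint
    rw [aux7_pullout hmEC hg hint hO]
    refine integral_congr_ae ?_
    filter_upwards [hom] with ω hω
    rw [hω]
  -- ∫ C j τC = ∫ C j O
  have keyτ : ∫ ω, C j ω * τC ω ∂P = ∫ ω, C j ω * O ω ∂P := by
    have h1 : ∫ ω, C j ω * τC ω ∂P = ∫ ω, C j ω * (P[O|MeasurableSpace.comap (C j) inferInstance]) ω ∂P := by
      refine integral_congr_ae ?_
      filter_upwards [hτae] with ω hω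
      exact congrArg (fun x => C j ω * x) hω
    rw [h1, ← aux7_pullout (hmj j) hCjmj.stronglyMeasurable (int_CO j) hO]
  -- ∫ τC = ∫ O
  have hMτ : ∫ ω, τC ω ∂P = ∫ ω, O ω ∂P := by
    rw [integral_congr_ae hτae, integral_condExp (hmj j)]
  -- product moments
  have prodCC : ∀ k, ∫ ω, C j ω * C k ω ∂P = if k = j then 1/3 else 1/4 := by
    intro k
    by_cases hk : k = j
    · subst hk; rw [if_pos rfl]; exact hm2 k
    · rw [if_neg hk]
      have hind : IndepFun (C j) (C k) P := hCindep.indepFun (fun h => hk h.symm)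
      have h := hind.integral_mul_eq_mul_integral (hCm j).aestronglyMeasurable (hCm k).aestronglyMeasurable
      calc ∫ ω, C j ω * C k ω ∂P = ∫ ω, (C j * C k) ω ∂P := rfl
        _ = (∫ ω, C j ω ∂P) * (∫ ω, C k ω ∂P) := h
        _ = 1/4 := by rw [hm1 j, hm1 k]; norm_num
  have herase : ∑ k ∈ Finset.univ.erase j, α k = 1 - α j := by
    have h := aux7_sum_split j α
    rw [hαsum] at h
    linarith
  -- ∫ C j * Ee
  have hCjE : ∫ ω, C j ω * Ee ω ∂P = α j * (1/3) + (1 - α j) * (1/4) := by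
    rw [keyE (C j) (hCmC j).stronglyMeasurable (int_CE j)]
    have hpt : ∀ ω, C j ω * (∑ k, α k * C k ω) = ∑ k, α k * (C j ω * C k ω) := by
      intro ω
      rw [Finset.mul_sum]
      exact Finset.sum_congr rfl fun k _ => by ring
    simp_rw [hpt]
    rw [integral_finset_sum _ (fun k _ => ((int_CC j k).const_mul (α k)))]
    simp_rw [integral_const_mul, prodCC]
    rw [aux7_sum_split j, if_pos rfl]
    have h : ∑ k ∈ Finset.univ.erase j, α k * (if k = j then (1:ℝ)/3 else 1/4)
        = (∑ k ∈ Finset.univ.erase j, α k) * (1/4) := by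
      rw [Finset.sum_mul]
      exact Finset.sum_congr rfl fun k hk => by rw [if_neg (Finset.ne_of_mem_erase hk)]
    rw [h, herase]
  -- ∫ C j * O
  have hCjO : ∫ ω, C j ω * O ω ∂P
      = β₀ * (1/2) + θ * (α j * (1/3) + (1 - α j) * (1/4))
        + (β j * (1/3) + (∑ k ∈ Finset.univ.erase j, β k) * (1/4)) := by
    rw [keyO (C j) (hCmEC j).stronglyMeasurable (int_CO j)]
    have hpt : ∀ ω, C j ω * (β₀ + θ * Ee ω + ∑ k, β k * C k ω)
        = β₀ * C j ω + θ * (C j ω * Ee ω) + ∑ k, β k * (C j ω * C k ω) := by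
      intro ω
      rw [mul_add, Finset.mul_sum]
      have h : ∑ k, C j ω * (β k * C k ω) = ∑ k, β k * (C j ω * C k ω) :=
        Finset.sum_congr rfl fun k _ => by ring
      rw [h]
      ring
    simp_rw [hpt]
    have i1 : Integrable (fun ω => β₀ * C j ω) P := (hCint j).const_mul β₀
    have i2 : Integrable (fun ω => θ * (C j ω * Ee ω)) P := (int_CE j).const_mul θ
    have i12 : Integrable (fun ω => β₀ * C j ω + θ * (C j ω * Ee ω)) P := i1.add i2
    have i3 : Integrable (fun ω => ∑ k, β k * (C j ω * C k ω)) P :=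
      integrable_finset_sum _ (fun k _ => (int_CC j k).const_mul (β k))
    rw [integral_add i12 i3, integral_add i1 i2,
      integral_const_mul, integral_const_mul, hm1 j, hCjE,
      integral_finset_sum _ (fun k _ => (int_CC j k).const_mul (β k))]
    simp_rw [integral_const_mul, prodCC]
    rw [aux7_sum_split j, if_pos rfl]
    have h : ∑ k ∈ Finset.univ.erase j, β k * (if k = j then (1:ℝ)/3 else 1/4)
        = (∑ k ∈ Finset.univ.erase j, β k) * (1/4) := by
      rw [Finset.sum_mul]
      exact Finset.sum_congr rfl fun k hk => by rw [if_neg (Finset.ne_of_mem_erase hk)]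
    rw [h]
  -- ∫ O
  have hMO : ∫ ω, O ω ∂P
      = β₀ + θ * (1/2) + (β j * (1/2) + (∑ k ∈ Finset.univ.erase j, β k) * (1/2)) := by
    have i1 : Integrable (fun _ : Ω => β₀) P := integrable_const β₀
    have i2 : Integrable (fun ω => θ * Ee ω) P := hEint.const_mul θ
    have i12 : Integrable (fun ω => β₀ + θ * Ee ω) P := i1.add i2
    have i3 : Integrable (fun ω => ∑ k, β k * C k ω) P :=
      integrable_finset_sum _ (fun k _ => (hCint k).const_mul (β k))
    rw [← integral_condExp hmEC (f := O), integral_congr_ae hom,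
      integral_add i12 i3, integral_add i1 i2,
      integral_const, integral_const_mul, hmean,
      integral_finset_sum _ (fun k _ => (hCint k).const_mul (β k))]
    simp_rw [integral_const_mul, hm1]
    rw [aux7_sum_split j]
    have h : ∑ k ∈ Finset.univ.erase j, β k * (1/2 : ℝ)
        = (∑ k ∈ Finset.univ.erase j, β k) * (1/2) := by rw [Finset.sum_mul]
    rw [h]
    simp
  -- the set integral over {E = 1}
  have hT1 : ∫ ω in {ω | Ee ω = 1}, τC ω ∂P = ∫ ω, τC ω * Ee ω ∂P := by
    rw [← integral_indicator hs1]
    refine integral_congr_ae (Filter.Eventually.of_forall fun ω => ?_)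
    rcases hEbin ω with h | h <;> simp [Set.indicator_apply, h]
  -- numerator over {E = 1}
  have hT1v : ∫ ω, τC ω * Ee ω ∂P
      = α j * (∫ ω, C j ω * O ω ∂P) + (1 - α j) * ((∫ ω, O ω ∂P) * (1/2)) := by
    rw [keyE τC hτCmC.stronglyMeasurable int_τE]
    have hpt : ∀ ω, τC ω * (∑ k, α k * C k ω) = ∑ k, α k * (C k ω * τC ω) := by
      intro ω
      rw [Finset.mul_sum]
      exact Finset.sum_congr rfl fun k _ => by ring
    simp_rw [hpt]
    rw [integral_finset_sum _ (fun k _ => (int_Cτ k).const_mul (α k))]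
    simp_rw [integral_const_mul]
    have hterm : ∀ k, k ≠ j → ∫ ω, C k ω * τC ω ∂P = (∫ ω, O ω ∂P) * (1/2) := by
      intro k hk
      have hind : IndepFun (C k) τC P := by
        have h0 : IndepFun (C k) (C j) P := hCindep.indepFun hk
        exact h0.comp measurable_id hτm
      have h := hind.integral_mul_eq_mul_integral (hCm k).aestronglyMeasurable (hτm.comp (hCm j)).aestronglyMeasurable
      calc ∫ ω, C k ω * τC ω ∂P = ∫ ω, (C k * τC) ω ∂P := rfl
        _ = (∫ ω, C k ω ∂P) * (∫ ω, τC ω ∂P) := h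
        _ = (∫ ω, O ω ∂P) * (1/2) := by rw [hm1 k, hMτ]; ring
    rw [aux7_sum_split j, keyτ]
    have h : ∑ k ∈ Finset.univ.erase j, α k * (∫ ω, C k ω * τC ω ∂P)
        = (∑ k ∈ Finset.univ.erase j, α k) * ((∫ ω, O ω ∂P) * (1/2)) := by
      rw [Finset.sum_mul]
      exact Finset.sum_congr rfl fun k hk => by
        rw [hterm k (Finset.ne_of_mem_erase hk)]
    rw [h, herase]
  -- the set integral over {E = 0}
  have hT0 : ∫ ω in {ω | Ee ω = 0}, τC ω ∂P = (∫ ω, O ω ∂P) - ∫ ω, τC ω * Ee ω ∂P := by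
    rw [← integral_indicator hs0, ← hMτ, ← integral_sub hτint int_τE]
    refine integral_congr_ae (Filter.Eventually.of_forall fun ω => ?_)
    rcases hEbin ω with h | h <;> simp [Set.indicator_apply, h]
  -- put everything together
  rw [show (∫ ω in {ω | Ee ω = 1}, τj (C j ω) ∂P) = ∫ ω in {ω | Ee ω = 1}, τC ω ∂P from rfl,
    show (∫ ω in {ω | Ee ω = 0}, τj (C j ω) ∂P) = ∫ ω in {ω | Ee ω = 0}, τC ω ∂P from rfl,
    hT1, hT0, hT1v, hCjO, hMO, ht1, ht0]
  ring
end

section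
/- Let τ* : ℝ → ℝ and π* : ℝ → ℝ be bounded measurable functions. Then E[O·π*(C) + τ*(C)·(1_{E=1} − π*(C))] = E[1_{E=1}·τ(C)] + E[(τ(C) − τ*(C))·(π*(C) − π(C))]. Equivalently, with θ(P) = E[1_{E=1}τ(C)] and the uncentered influence function D(ω) = O·π*(C) + τ*(C)(1_{E=1} − π*(C)) − θ*, one has θ* + E[D] = θ(P) + E[(τ(C) − τ*(C))(π*(C) − π(C))] for any θ* ∈ ℝ. (The remainder-term identity R_θ(P, P⁰) of Web Appendix B, Lemma on the functional expansion.) -/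
open MeasureTheory ProbabilityTheory

lemma tower_mul {Ω : Type*} {m0 : MeasurableSpace Ω} {P : Measure Ω} [IsProbabilityMeasure P]
    {m : MeasurableSpace Ω} (hm : m ≤ m0) {f g : Ω → ℝ}
    (hf : StronglyMeasurable[m] f) (hfg : Integrable (f * g) P) (hg : Integrable g P) :
    ∫ ω, f ω * g ω ∂P = ∫ ω, f ω * (P[g|m]) ω ∂P := by
  have h1 : (∫ ω, (P[f * g|m]) ω ∂P) = ∫ ω, f ω * g ω ∂P := integral_condExp hm
  rw [← h1]
  exact integral_congr_ae (condExp_mul_of_stronglyMeasurable_left hf hfg hg)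

lemma bdd_int {Ω : Type*} {m0 : MeasurableSpace Ω} {P : Measure Ω} [IsProbabilityMeasure P]
    {f : Ω → ℝ} (hf : Measurable f) (hb : ∃ M, ∀ x, |f x| ≤ M) : Integrable f P := by
  obtain ⟨M, hM⟩ := hb
  exact (integrable_const M).mono' hf.aestronglyMeasurable (ae_of_all _ fun ω => by
    simpa using hM ω)

/-- **Remainder-term identity of Web Appendix B.** For bounded measurable `τ*, π*`,
`E[O·π*(C) + τ*(C)(1_{E=1} − π*(C))] = E[1_{E=1}τ(C)] + E[(τ(C) − τ*(C))(π*(C) − π(C))]`;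
equivalently, with `θ(P) = E[1_{E=1}τ(C)]` and
`D = O·π*(C) + τ*(C)(1_{E=1} − π*(C)) − θ*`, one has
`θ* + E[D] = θ(P) + E[(τ(C) − τ*(C))(π*(C) − π(C))]` for every `θ* ∈ ℝ`. -/
theorem stmt8
    {Ω : Type*} [MeasurableSpace Ω] {P : Measure Ω} [IsProbabilityMeasure P]
    (O Ee C : Ω → ℝ)
    (hO : Integrable O P) (hEe : Measurable Ee) (hC : Measurable C)
    (hEbin : ∀ ω, Ee ω = 0 ∨ Ee ω = 1)
    (τ π : ℝ → ℝ) (hτm : Measurable τ) (hπm : Measurable π)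
    (hπ01 : ∀ x, π x ∈ Set.Icc (0 : ℝ) 1)
    (hτint : Integrable (fun ω => τ (C ω)) P)
    (hτver : (fun ω => τ (C ω)) =ᵐ[P] P[O | MeasurableSpace.comap C inferInstance])
    (hπver : (fun ω => π (C ω)) =ᵐ[P]
      P[(fun ω => if Ee ω = 1 then (1 : ℝ) else 0) | MeasurableSpace.comap C inferInstance])
    (τs πs : ℝ → ℝ) (hτsm : Measurable τs) (hπsm : Measurable πs)
    (hτsb : ∃ M, ∀ x, |τs x| ≤ M) (hπsb : ∃ M, ∀ x, |πs x| ≤ M) :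
    (∫ ω, (O ω * πs (C ω)
          + τs (C ω) * ((if Ee ω = 1 then (1 : ℝ) else 0) - πs (C ω))) ∂P)
      = (∫ ω, (if Ee ω = 1 then (1 : ℝ) else 0) * τ (C ω) ∂P)
        + ∫ ω, (τ (C ω) - τs (C ω)) * (πs (C ω) - π (C ω)) ∂P
    ∧ ∀ θs : ℝ,
        θs + (∫ ω, (O ω * πs (C ω)
            + τs (C ω) * ((if Ee ω = 1 then (1 : ℝ) else 0) - πs (C ω)) - θs) ∂P)
          = (∫ ω, (if Ee ω = 1 then (1 : ℝ) else 0) * τ (C ω) ∂P)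
            + ∫ ω, (τ (C ω) - τs (C ω)) * (πs (C ω) - π (C ω)) ∂P := by
  have hm : MeasurableSpace.comap C (inferInstance : MeasurableSpace ℝ) ≤ _ := hC.comap_le
  set ind : Ω → ℝ := fun ω => if Ee ω = 1 then (1 : ℝ) else 0 with hind_def
  have hCm : Measurable[MeasurableSpace.comap C (inferInstance : MeasurableSpace ℝ)] C := Measurable.of_comap_le le_rfl
  have hindm : Measurable ind := Measurable.ite (hEe (measurableSet_singleton 1))
    measurable_const measurable_const
  have hindb : ∃ M, ∀ ω, |ind ω| ≤ M := ⟨1, fun ω => by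
    simp only [hind_def]; split <;> norm_num⟩
  have hindint : Integrable ind P := bdd_int hindm hindb
  -- bounded measurable composed functions
  have hτsC : Measurable fun ω => τs (C ω) := hτsm.comp hC
  have hπsC : Measurable fun ω => πs (C ω) := hπsm.comp hC
  have hπC : Measurable fun ω => π (C ω) := hπm.comp hC
  have hτsCb : ∃ M, ∀ ω, |τs (C ω)| ≤ M := hτsb.imp fun M h ω => h _
  have hπsCb : ∃ M, ∀ ω, |πs (C ω)| ≤ M := hπsb.imp fun M h ω => h _
  have hπCb : ∃ M, ∀ ω, |π (C ω)| ≤ M := ⟨1, fun ω =>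
    abs_le.mpr ⟨by linarith [(hπ01 (C ω)).1], (hπ01 (C ω)).2⟩⟩
  -- strongly measurable wrt m
  have smτs : StronglyMeasurable[MeasurableSpace.comap C (inferInstance : MeasurableSpace ℝ)] fun ω => τs (C ω) := (hτsm.comp hCm).stronglyMeasurable
  have smπs : StronglyMeasurable[MeasurableSpace.comap C (inferInstance : MeasurableSpace ℝ)] fun ω => πs (C ω) := (hπsm.comp hCm).stronglyMeasurable
  have smτ : StronglyMeasurable[MeasurableSpace.comap C (inferInstance : MeasurableSpace ℝ)] fun ω => τ (C ω) := (hτm.comp hCm).stronglyMeasurable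
  -- integrability facts
  have Iπs_O : Integrable (fun ω => πs (C ω) * O ω) P :=
    hO.bdd_mul hπsC.aestronglyMeasurable (c := hπsCb.choose) (ae_of_all _ fun ω => by simpa using hπsCb.choose_spec ω)
  have Iτs_ind : Integrable (fun ω => τs (C ω) * ind ω) P :=
    hindint.bdd_mul hτsC.aestronglyMeasurable (c := hτsCb.choose) (ae_of_all _ fun ω => by simpa using hτsCb.choose_spec ω)
  have Iτs_πs : Integrable (fun ω => τs (C ω) * πs (C ω)) P :=
    bdd_int (hτsC.mul hπsC) (by
      obtain ⟨M1, h1⟩ := hτsCb; obtain ⟨M2, h2⟩ := hπsCb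
      exact ⟨M1 * M2, fun ω => by
        rw [abs_mul]
        exact mul_le_mul (h1 ω) (h2 ω) (abs_nonneg _) ((abs_nonneg _).trans (h1 ω))⟩)
  have Iτs_π : Integrable (fun ω => τs (C ω) * π (C ω)) P :=
    bdd_int (hτsC.mul hπC) (by
      obtain ⟨M1, h1⟩ := hτsCb; obtain ⟨M2, h2⟩ := hπCb
      exact ⟨M1 * M2, fun ω => by
        rw [abs_mul]
        exact mul_le_mul (h1 ω) (h2 ω) (abs_nonneg _) ((abs_nonneg _).trans (h1 ω))⟩)
  have Iτ_πs : Integrable (fun ω => τ (C ω) * πs (C ω)) P := by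
    have := hτint.bdd_mul hπsC.aestronglyMeasurable
      (c := hπsCb.choose) (ae_of_all _ fun ω => by simpa using hπsCb.choose_spec ω)
    exact this.congr (ae_of_all _ fun ω => mul_comm _ _)
  have Iτ_π : Integrable (fun ω => τ (C ω) * π (C ω)) P := by
    have := hτint.bdd_mul hπC.aestronglyMeasurable
      (c := hπCb.choose) (ae_of_all _ fun ω => by simpa using hπCb.choose_spec ω)
    exact this.congr (ae_of_all _ fun ω => mul_comm _ _)
  have Iτ_ind : Integrable (fun ω => τ (C ω) * ind ω) P := by
    have := hτint.bdd_mul hindm.aestronglyMeasurable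
      (c := hindb.choose) (ae_of_all _ fun ω => by simpa using hindb.choose_spec ω)
    exact this.congr (ae_of_all _ fun ω => mul_comm _ _)
  -- three tower-property identities
  have e1 : ∫ ω, πs (C ω) * O ω ∂P = ∫ ω, πs (C ω) * τ (C ω) ∂P := by
    rw [tower_mul hm smπs Iπs_O hO]
    refine integral_congr_ae ?_
    filter_upwards [hτver] with ω h
    rw [← h]
  have e2 : ∫ ω, τs (C ω) * ind ω ∂P = ∫ ω, τs (C ω) * π (C ω) ∂P := by
    rw [tower_mul hm smτs Iτs_ind hindint]
    refine integral_congr_ae ?_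
    filter_upwards [hπver] with ω h
    rw [← h]
  have e3 : ∫ ω, τ (C ω) * ind ω ∂P = ∫ ω, τ (C ω) * π (C ω) ∂P := by
    rw [tower_mul hm smτ Iτ_ind hindint]
    refine integral_congr_ae ?_
    filter_upwards [hπver] with ω h
    rw [← h]
  -- expand both sides
  have ILHS : Integrable (fun ω => O ω * πs (C ω) + τs (C ω) * (ind ω - πs (C ω))) P := by
    refine ((Iπs_O.congr (ae_of_all _ fun ω => mul_comm _ _)).add
      ((Iτs_ind.sub Iτs_πs).congr (ae_of_all _ fun ω => (mul_sub _ _ _).symm)))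
  have expandL : (∫ ω, (O ω * πs (C ω) + τs (C ω) * (ind ω - πs (C ω))) ∂P)
      = (∫ ω, πs (C ω) * O ω ∂P) + ((∫ ω, τs (C ω) * ind ω ∂P)
        - ∫ ω, τs (C ω) * πs (C ω) ∂P) := by
    have hfe : (fun ω => O ω * πs (C ω) + τs (C ω) * (ind ω - πs (C ω)))
        = fun ω => πs (C ω) * O ω + (τs (C ω) * ind ω - τs (C ω) * πs (C ω)) :=
      funext fun ω => by ring
    have Isub : Integrable (fun ω => τs (C ω) * ind ω - τs (C ω) * πs (C ω)) P :=
      Iτs_ind.sub Iτs_πs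
    rw [hfe, integral_add Iπs_O Isub, integral_sub Iτs_ind Iτs_πs]
  have expandR : (∫ ω, (τ (C ω) - τs (C ω)) * (πs (C ω) - π (C ω)) ∂P)
      = ((∫ ω, τ (C ω) * πs (C ω) ∂P) - ∫ ω, τ (C ω) * π (C ω) ∂P)
        - ((∫ ω, τs (C ω) * πs (C ω) ∂P) - ∫ ω, τs (C ω) * π (C ω) ∂P) := by
    have hfe : (fun ω => (τ (C ω) - τs (C ω)) * (πs (C ω) - π (C ω)))
        = fun ω => (τ (C ω) * πs (C ω) - τ (C ω) * π (C ω))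
          - (τs (C ω) * πs (C ω) - τs (C ω) * π (C ω)) := funext fun ω => by ring
    have Is1 : Integrable (fun ω => τ (C ω) * πs (C ω) - τ (C ω) * π (C ω)) P :=
      Iτ_πs.sub Iτ_π
    have Is2 : Integrable (fun ω => τs (C ω) * πs (C ω) - τs (C ω) * π (C ω)) P :=
      Iτs_πs.sub Iτs_π
    rw [hfe, integral_sub Is1 Is2, integral_sub Iτ_πs Iτ_π, integral_sub Iτs_πs Iτs_π]
  have eθ : (∫ ω, ind ω * τ (C ω) ∂P) = ∫ ω, τ (C ω) * ind ω ∂P :=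
    integral_congr_ae (ae_of_all _ fun ω => mul_comm _ _)
  have eO : (∫ ω, O ω * πs (C ω) ∂P) = ∫ ω, πs (C ω) * O ω ∂P :=
    integral_congr_ae (ae_of_all _ fun ω => mul_comm _ _)
  have eπτ : (∫ ω, πs (C ω) * τ (C ω) ∂P) = ∫ ω, τ (C ω) * πs (C ω) ∂P :=
    integral_congr_ae (ae_of_all _ fun ω => mul_comm _ _)
  have main : (∫ ω, (O ω * πs (C ω) + τs (C ω) * (ind ω - πs (C ω))) ∂P)
      = (∫ ω, ind ω * τ (C ω) ∂P)
        + ∫ ω, (τ (C ω) - τs (C ω)) * (πs (C ω) - π (C ω)) ∂P := by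
    rw [expandL, expandR, eθ, e1, e2, e3, eπτ]; ring
  refine ⟨main, fun θs => ?_⟩
  have : (∫ ω, (O ω * πs (C ω) + τs (C ω) * (ind ω - πs (C ω)) - θs) ∂P)
      = (∫ ω, (O ω * πs (C ω) + τs (C ω) * (ind ω - πs (C ω))) ∂P) - θs := by
    rw [integral_sub ILHS (integrable_const θs), integral_const]
    simp
  rw [this, main]; ring
end

section
/- Let τ* : ℝ → ℝ be any measurable function with τ*(C) integrable. Then E[O·π(C) + τ*(C)·(1_{E=1} − π(C))] = E[1_{E=1}·τ(C)] = θ(P). (Double-robustness identity when the propensity score is correctly specified; the second case in the proof of the double robustness lemma of Web Appendix A.) -/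
open MeasureTheory ProbabilityTheory

/-- Pull-out identity: for `f` strongly measurable w.r.t. the sub-σ-algebra,
`∫ f·X = ∫ f·E[X|m]`. -/
lemma pullout_aux {Ω : Type*} [inst : MeasurableSpace Ω] {P : Measure Ω}
    [IsProbabilityMeasure P] {m : MeasurableSpace Ω} (hm : m ≤ inst)
    {f X : Ω → ℝ} (hf : StronglyMeasurable[m] f)
    (hX : Integrable X P) (hfX : Integrable (fun ω => f ω * X ω) P) :
    ∫ ω, f ω * X ω ∂P = ∫ ω, f ω * (P[X | m]) ω ∂P := by
  rw [← integral_condExp hm (f := fun ω => f ω * X ω)]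
  exact integral_congr_ae (condExp_mul_of_stronglyMeasurable_left hf hfX hX)

/-- **Double robustness, propensity score correctly specified (Web Appendix A).**
For any measurable `τ*` with `τ*(C)` integrable,
`E[O·π(C) + τ*(C)(1_{E=1} − π(C))] = E[1_{E=1}·τ(C)] = θ(P)`. -/
theorem stmt10
    {Ω : Type*} [MeasurableSpace Ω] {P : Measure Ω} [IsProbabilityMeasure P]
    (O Ee C : Ω → ℝ)
    (hO : Integrable O P) (hEe : Measurable Ee) (hC : Measurable C)
    (hEbin : ∀ ω, Ee ω = 0 ∨ Ee ω = 1)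
    (τ π : ℝ → ℝ) (hτm : Measurable τ) (hπm : Measurable π)
    (hπ01 : ∀ x, π x ∈ Set.Icc (0 : ℝ) 1)
    (hτint : Integrable (fun ω => τ (C ω)) P)
    (hτver : (fun ω => τ (C ω)) =ᵐ[P] P[O | MeasurableSpace.comap C inferInstance])
    (hπver : (fun ω => π (C ω)) =ᵐ[P]
      P[(fun ω => if Ee ω = 1 then (1 : ℝ) else 0) | MeasurableSpace.comap C inferInstance])
    (τs : ℝ → ℝ) (hτsm : Measurable τs) (hτsint : Integrable (fun ω => τs (C ω)) P) :
    (∫ ω, (O ω * π (C ω)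
          + τs (C ω) * ((if Ee ω = 1 then (1 : ℝ) else 0) - π (C ω))) ∂P)
      = ∫ ω, (if Ee ω = 1 then (1 : ℝ) else 0) * τ (C ω) ∂P := by
  have hm : MeasurableSpace.comap C inferInstance ≤ ‹MeasurableSpace Ω› := hC.comap_le
  have hCm : Measurable[MeasurableSpace.comap C inferInstance] C :=
    Measurable.of_comap_le le_rfl
  set I : Ω → ℝ := fun ω => if Ee ω = 1 then (1 : ℝ) else 0 with hI
  have hImeas : Measurable I :=
    Measurable.ite (hEe (measurableSet_singleton 1)) measurable_const measurable_const
  have hIbd : ∀ ω, ‖I ω‖ ≤ 1 := by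
    intro ω; simp only [hI]; split <;> simp
  have hIint : Integrable I P :=
    (integrable_const (1 : ℝ)).mono' hImeas.aestronglyMeasurable (ae_of_all _ hIbd)
  have hπbd : ∀ ω, ‖π (C ω)‖ ≤ 1 := by
    intro ω
    have h := hπ01 (C ω)
    rw [Real.norm_eq_abs, abs_le]; constructor <;> linarith [h.1, h.2]
  have hπCm : StronglyMeasurable[MeasurableSpace.comap C inferInstance]
      (fun ω => π (C ω)) := ((hπm.comp hCm).stronglyMeasurable)
  have hτsCm : StronglyMeasurable[MeasurableSpace.comap C inferInstance]
      (fun ω => τs (C ω)) := ((hτsm.comp hCm).stronglyMeasurable)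
  have hτCm : StronglyMeasurable[MeasurableSpace.comap C inferInstance]
      (fun ω => τ (C ω)) := ((hτm.comp hCm).stronglyMeasurable)
  have hπO : Integrable (fun ω => π (C ω) * O ω) P :=
    hO.bdd_mul (hπm.comp hC).aestronglyMeasurable (ae_of_all _ hπbd)
  have hτsI : Integrable (fun ω => τs (C ω) * I ω) P := by
    have := hτsint.bdd_mul hImeas.aestronglyMeasurable (ae_of_all _ hIbd)
    simpa [mul_comm] using this
  have hτsπ : Integrable (fun ω => τs (C ω) * π (C ω)) P := by
    have := hτsint.bdd_mul (hπm.comp hC).aestronglyMeasurable (ae_of_all _ hπbd)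
    simpa [mul_comm] using this
  have hτI : Integrable (fun ω => τ (C ω) * I ω) P := by
    have := hτint.bdd_mul hImeas.aestronglyMeasurable (ae_of_all _ hIbd)
    simpa [mul_comm] using this
  have key1 : ∫ ω, π (C ω) * O ω ∂P = ∫ ω, π (C ω) * τ (C ω) ∂P := by
    rw [pullout_aux hm hπCm hO hπO]
    refine integral_congr_ae ?_
    filter_upwards [hτver] with ω h
    rw [← h]
  have key2 : ∫ ω, τs (C ω) * I ω ∂P = ∫ ω, τs (C ω) * π (C ω) ∂P := by
    rw [pullout_aux hm hτsCm hIint hτsI]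
    refine integral_congr_ae ?_
    filter_upwards [hπver] with ω h
    rw [← h]
  have key3 : ∫ ω, τ (C ω) * I ω ∂P = ∫ ω, τ (C ω) * π (C ω) ∂P := by
    rw [pullout_aux hm hτCm hIint hτI]
    refine integral_congr_ae ?_
    filter_upwards [hπver] with ω h
    rw [← h]
  have hLHS : (∫ ω, (O ω * π (C ω) + τs (C ω) * (I ω - π (C ω))) ∂P)
      = (∫ ω, π (C ω) * O ω ∂P) + ((∫ ω, τs (C ω) * I ω ∂P)
        - ∫ ω, τs (C ω) * π (C ω) ∂P) := by
    have h1 : Integrable (fun ω => O ω * π (C ω)) P := by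
      simpa [mul_comm] using hπO
    have h2 : Integrable (fun ω => τs (C ω) * (I ω - π (C ω))) P :=
      (hτsI.sub hτsπ).congr (ae_of_all _ fun ω => by simp only [Pi.sub_apply]; ring)
    rw [integral_add h1 h2]
    congr 1
    · exact integral_congr_ae (ae_of_all _ fun ω => mul_comm _ _)
    · rw [← integral_sub hτsI hτsπ]
      exact integral_congr_ae (ae_of_all _ fun ω => by simp only [Pi.sub_apply]; ring)
  rw [hLHS, key1, key2, sub_self, add_zero]
  rw [show (∫ ω, I ω * τ (C ω) ∂P) = ∫ ω, τ (C ω) * I ω ∂P from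
    integral_congr_ae (ae_of_all _ fun ω => mul_comm _ _), key3]
  exact integral_congr_ae (ae_of_all _ fun ω => mul_comm _ _)
end

section
/- Let (O_i, E_i, C_i), i = 1, 2, …, be i.i.d. copies of (O, E, C). Let τ_n, π_n : ℝ → ℝ be measurable functions, uniformly bounded in n, converging pointwise to limits τ* and π* respectively, with τ*, π* bounded. If either τ* = τ almost everywhere with respect to the law of C, or π* = π almost everywhere with respect to the law of C, then the doubly robust estimator θ̂_n = n^{-1} Σ_{i=1}^n [1_{E_i=1}·τ_n(C_i) + O_i·π_n(C_i) − τ_n(C_i)·π_n(C_i)] converges in probability to θ(P) = E[1_{E=1}·τ(C)]. (The double robustness lemma of Web Appendix A.) -/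
open MeasureTheory ProbabilityTheory Filter

private lemma dr_pull_aux {Ω : Type*} [mΩ : MeasurableSpace Ω] {P : Measure Ω}
    [IsProbabilityMeasure P] {m : MeasurableSpace Ω} (hmle : m ≤ mΩ)
    (f g : Ω → ℝ) (hf : StronglyMeasurable[m] f) (hfg : Integrable (fun ω => f ω * g ω) P)
    (hg : Integrable g P) :
    ∫ ω, f ω * g ω ∂P = ∫ ω, f ω * (P[g|m]) ω ∂P := by
  have h1 : P[f * g|m] =ᵐ[P] f * P[g|m] := condExp_mul_of_stronglyMeasurable_left hf hfg hg
  have h2 : ∫ ω, (P[f * g|m]) ω ∂P = ∫ ω, (f * g) ω ∂P := integral_condExp hmle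
  calc ∫ ω, f ω * g ω ∂P = ∫ ω, (P[f * g|m]) ω ∂P := h2.symm
    _ = ∫ ω, (f * P[g|m]) ω ∂P := integral_congr_ae h1
    _ = _ := rfl

/-- **Double robustness lemma of Web Appendix A.** For i.i.d. copies `(O_i, E_i, C_i)` of
`(O, E, C)` and uniformly bounded measurable `τ_n, π_n` converging pointwise to bounded
limits `τ*, π*`, if either `τ* = τ` a.e.-law of `C` or `π* = π` a.e.-law of `C`, then the
doubly robust estimator
`θ̂_n = n⁻¹ Σ_{i<n} [1_{E_i=1}·τ_n(C_i) + O_i·π_n(C_i) − τ_n(C_i)·π_n(C_i)]`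
converges in probability to `θ(P) = E[1_{E=1}·τ(C)]`. -/
theorem stmt18
    {Ω : Type*} [MeasurableSpace Ω] {P : Measure Ω} [IsProbabilityMeasure P]
    (O Ee C : Ω → ℝ)
    (hOm : Measurable O) (hO : Integrable O P) (hEe : Measurable Ee) (hC : Measurable C)
    (hEbin : ∀ ω, Ee ω = 0 ∨ Ee ω = 1)
    (τ π : ℝ → ℝ) (hτm : Measurable τ) (hπm : Measurable π)
    (hπ01 : ∀ x, π x ∈ Set.Icc (0 : ℝ) 1)
    (hτint : Integrable (fun ω => τ (C ω)) P)
    (hτver : (fun ω => τ (C ω)) =ᵐ[P] P[O | MeasurableSpace.comap C inferInstance])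
    (hπver : (fun ω => π (C ω)) =ᵐ[P]
      P[(fun ω => if Ee ω = 1 then (1 : ℝ) else 0) | MeasurableSpace.comap C inferInstance])
    -- the i.i.d. sequence of copies of (O, E, C)
    (Oi Ei Ci : ℕ → Ω → ℝ)
    (hm : ∀ i, Measurable fun ω => (Oi i ω, Ei i ω, Ci i ω))
    (hiid : iIndepFun (fun i ω => (Oi i ω, Ei i ω, Ci i ω)) P)
    (hlaw : ∀ i, Measure.map (fun ω => (Oi i ω, Ei i ω, Ci i ω)) P
      = Measure.map (fun ω => (O ω, Ee ω, C ω)) P)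
    -- the estimated nuisance functions and their limits
    (τn πn : ℕ → ℝ → ℝ) (hτnm : ∀ n, Measurable (τn n)) (hπnm : ∀ n, Measurable (πn n))
    (hub : ∃ M : ℝ, ∀ n x, |τn n x| ≤ M ∧ |πn n x| ≤ M)
    (τs πs : ℝ → ℝ)
    (hτs : ∀ x, Tendsto (fun n => τn n x) atTop (nhds (τs x)))
    (hπs : ∀ x, Tendsto (fun n => πn n x) atTop (nhds (πs x)))
    (hτsb : ∃ M : ℝ, ∀ x, |τs x| ≤ M) (hπsb : ∃ M : ℝ, ∀ x, |πs x| ≤ M)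
    -- either the outcome regression or the propensity score is correctly specified
    (hdr : (∀ᵐ x ∂(Measure.map C P), τs x = τ x) ∨ (∀ᵐ x ∂(Measure.map C P), πs x = π x)) :
    TendstoInMeasure P
      (fun (n : ℕ) ω => (n : ℝ)⁻¹ * ∑ i ∈ Finset.range n,
        ((if Ei i ω = 1 then (1 : ℝ) else 0) * τn n (Ci i ω)
          + Oi i ω * πn n (Ci i ω) - τn n (Ci i ω) * πn n (Ci i ω)))
      atTop
      (fun _ => ∫ ω, (if Ee ω = 1 then (1 : ℝ) else 0) * τ (C ω) ∂P) := by
  classical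
  obtain ⟨M, hM⟩ := hub
  obtain ⟨M1, hM1⟩ := hτsb
  obtain ⟨M2, hM2⟩ := hπsb
  have hτsm : Measurable τs :=
    measurable_of_tendsto_metrizable' atTop hτnm (tendsto_pi_nhds.mpr hτs)
  have hπsm : Measurable πs :=
    measurable_of_tendsto_metrizable' atTop hπnm (tendsto_pi_nhds.mpr hπs)
  set K : ℝ := |M| + |M1| + |M2| + 1 with hKdef
  have hK1 : (1:ℝ) ≤ K := by
    have := abs_nonneg M; have := abs_nonneg M1; have := abs_nonneg M2; simp only [hKdef]; linarith
  have hK0 : (0:ℝ) ≤ K := by linarith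
  have hMK : |M| ≤ K := by
    have := abs_nonneg M1; have := abs_nonneg M2; simp only [hKdef]; linarith
  have hM1K : |M1| ≤ K := by
    have := abs_nonneg M; have := abs_nonneg M2; simp only [hKdef]; linarith
  have hM2K : |M2| ≤ K := by
    have := abs_nonneg M; have := abs_nonneg M1; simp only [hKdef]; linarith
  have hτnK : ∀ n x, |τn n x| ≤ K := fun n x => ((hM n x).1.trans (le_abs_self M)).trans hMK
  have hπnK : ∀ n x, |πn n x| ≤ K := fun n x => ((hM n x).2.trans (le_abs_self M)).trans hMK
  have hτsK : ∀ x, |τs x| ≤ K := fun x => ((hM1 x).trans (le_abs_self M1)).trans hM1K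
  have hπsK : ∀ x, |πs x| ≤ K := fun x => ((hM2 x).trans (le_abs_self M2)).trans hM2K
  set ind : ℝ → ℝ := fun e => if e = 1 then 1 else 0 with hinddef
  have hindm : Measurable ind := Measurable.ite (measurableSet_eq) measurable_const measurable_const
  have hind1 : ∀ e, |ind e| ≤ 1 := by
    intro e; by_cases h : e = 1 <;> simp [hinddef, h]
  set X : Ω → ℝ × ℝ × ℝ := fun ω => (O ω, Ee ω, C ω) with hXdef
  set T : ℕ → Ω → ℝ × ℝ × ℝ := fun i ω => (Oi i ω, Ei i ω, Ci i ω) with hTdef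
  have hXm : Measurable X := hOm.prodMk (hEe.prodMk hC)
  have hTm : ∀ i, Measurable (T i) := fun i => hm i
  have hTlaw : ∀ i, Measure.map (T i) P = Measure.map X P := fun i => hlaw i
  set Fs : ℝ × ℝ × ℝ → ℝ :=
    fun p => ind p.2.1 * τs p.2.2 + p.1 * πs p.2.2 - τs p.2.2 * πs p.2.2 with hFsdef
  set Fn : ℕ → ℝ × ℝ × ℝ → ℝ :=
    fun n p => ind p.2.1 * τn n p.2.2 + p.1 * πn n p.2.2 - τn n p.2.2 * πn n p.2.2 with hFndef
  have hp1 : Measurable fun p : ℝ × ℝ × ℝ => p.1 := measurable_fst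
  have hp21 : Measurable fun p : ℝ × ℝ × ℝ => p.2.1 := measurable_fst.comp measurable_snd
  have hp22 : Measurable fun p : ℝ × ℝ × ℝ => p.2.2 := measurable_snd.comp measurable_snd
  have hFsm : Measurable Fs :=
    (((hindm.comp hp21).mul (hτsm.comp hp22)).add (hp1.mul (hπsm.comp hp22))).sub
      ((hτsm.comp hp22).mul (hπsm.comp hp22))
  have hFnm : ∀ n, Measurable (Fn n) := fun n =>
    (((hindm.comp hp21).mul ((hτnm n).comp hp22)).add (hp1.mul ((hπnm n).comp hp22))).sub
      (((hτnm n).comp hp22).mul ((hπnm n).comp hp22))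
  -- transfer lemmas between the copies and the original variables
  have key_int : ∀ g : ℝ × ℝ × ℝ → ℝ, Measurable g → Integrable (fun ω => g (X ω)) P →
      ∀ i, Integrable (fun ω => g (T i ω)) P := by
    intro g hg hgX i
    have h1 : Integrable g (Measure.map X P) :=
      (integrable_map_measure hg.aestronglyMeasurable hXm.aemeasurable).mpr hgX
    rw [← hTlaw i] at h1
    exact (integrable_map_measure hg.aestronglyMeasurable (hTm i).aemeasurable).mp h1
  have key_eq : ∀ g : ℝ × ℝ × ℝ → ℝ, Measurable g →
      ∀ i, ∫ ω, g (T i ω) ∂P = ∫ ω, g (X ω) ∂P := by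
    intro g hg i
    rw [← integral_map (hTm i).aemeasurable hg.aestronglyMeasurable, hTlaw i,
      integral_map hXm.aemeasurable hg.aestronglyMeasurable]
  have habs3 : ∀ a b c : ℝ, |a + b - c| ≤ |a| + |b| + |c| := by
    intro a b c
    have h1 := abs_add_le (a + b) (-c)
    have h2 := abs_add_le a b
    rw [abs_neg] at h1
    calc |a + b - c| = |a + b + -c| := by ring_nf
      _ ≤ |a + b| + |c| := h1
      _ ≤ |a| + |b| + |c| := by linarith
  have habs_sub : ∀ a b : ℝ, |a - b| ≤ |a| + |b| := by
    intro a b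
    have := abs_add_le a (-b)
    simpa [sub_eq_add_neg] using this
  -- bound on Fs
  have hFsbd : ∀ p : ℝ × ℝ × ℝ, |Fs p| ≤ (K + K * K) + |p.1| * K := by
    intro p
    have h1 : |ind p.2.1 * τs p.2.2| ≤ K := by
      rw [abs_mul]
      calc |ind p.2.1| * |τs p.2.2| ≤ 1 * K :=
        mul_le_mul (hind1 _) (hτsK _) (abs_nonneg _) zero_le_one
        _ = K := one_mul K
    have h2 : |p.1 * πs p.2.2| ≤ |p.1| * K := by
      rw [abs_mul]; exact mul_le_mul_of_nonneg_left (hπsK _) (abs_nonneg _)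
    have h3 : |τs p.2.2 * πs p.2.2| ≤ K * K := by
      rw [abs_mul]; exact mul_le_mul (hτsK _) (hπsK _) (abs_nonneg _) hK0
    have := habs3 (ind p.2.1 * τs p.2.2) (p.1 * πs p.2.2) (τs p.2.2 * πs p.2.2)
    simp only [hFsdef]
    linarith
  -- bound on the difference
  have hDbd : ∀ n p, |Fn n p - Fs p| ≤ (2 * K + 2 * (K * K)) + |p.1| * (2 * K) := by
    intro n p
    have hrw : Fn n p - Fs p =
        ind p.2.1 * (τn n p.2.2 - τs p.2.2) + p.1 * (πn n p.2.2 - πs p.2.2)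
          - (τn n p.2.2 * πn n p.2.2 - τs p.2.2 * πs p.2.2) := by
      simp only [hFndef, hFsdef]; ring
    have h1 : |ind p.2.1 * (τn n p.2.2 - τs p.2.2)| ≤ 2 * K := by
      rw [abs_mul]
      calc |ind p.2.1| * |τn n p.2.2 - τs p.2.2| ≤ 1 * (2 * K) := by
            refine mul_le_mul (hind1 _) ?_ (abs_nonneg _) zero_le_one
            have := habs_sub (τn n p.2.2) (τs p.2.2)
            have := hτnK n p.2.2; have := hτsK p.2.2; linarith
        _ = 2 * K := one_mul _
    have h2 : |p.1 * (πn n p.2.2 - πs p.2.2)| ≤ |p.1| * (2 * K) := by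
      rw [abs_mul]
      refine mul_le_mul_of_nonneg_left ?_ (abs_nonneg _)
      have := habs_sub (πn n p.2.2) (πs p.2.2)
      have := hπnK n p.2.2; have := hπsK p.2.2; linarith
    have h3 : |τn n p.2.2 * πn n p.2.2 - τs p.2.2 * πs p.2.2| ≤ 2 * (K * K) := by
      have := habs_sub (τn n p.2.2 * πn n p.2.2) (τs p.2.2 * πs p.2.2)
      have ha : |τn n p.2.2 * πn n p.2.2| ≤ K * K := by
        rw [abs_mul]; exact mul_le_mul (hτnK n _) (hπnK n _) (abs_nonneg _) hK0
      have hb : |τs p.2.2 * πs p.2.2| ≤ K * K := by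
        rw [abs_mul]; exact mul_le_mul (hτsK _) (hπsK _) (abs_nonneg _) hK0
      linarith
    have := habs3 (ind p.2.1 * (τn n p.2.2 - τs p.2.2)) (p.1 * (πn n p.2.2 - πs p.2.2))
      (τn n p.2.2 * πn n p.2.2 - τs p.2.2 * πs p.2.2)
    rw [hrw]
    linarith
  -- pointwise convergence of the difference
  have hDto : ∀ p : ℝ × ℝ × ℝ, Tendsto (fun n => Fn n p - Fs p) atTop (nhds 0) := by
    intro p
    have h1 : Tendsto (fun n => Fn n p) atTop (nhds (Fs p)) := by
      simp only [hFndef, hFsdef]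
      exact ((tendsto_const_nhds.mul (hτs _)).add (tendsto_const_nhds.mul (hπs _))).sub
        ((hτs _).mul (hπs _))
    simpa using h1.sub_const (Fs p)
  -- integrability on X
  have hFsX_int : Integrable (fun ω => Fs (X ω)) P := by
    refine Integrable.mono' ((integrable_const (K + K * K)).add (hO.abs.mul_const K))
      (hFsm.comp hXm).aestronglyMeasurable ?_
    filter_upwards with ω
    simp only [Pi.add_apply, Real.norm_eq_abs]
    exact hFsbd (X ω)
  have hDX_int : ∀ n, Integrable (fun ω => |Fn n (X ω) - Fs (X ω)|) P := by
    intro n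
    refine Integrable.mono' ((integrable_const (2 * K + 2 * (K * K))).add (hO.abs.mul_const (2 * K)))
      (((hFnm n).comp hXm).sub (hFsm.comp hXm)).abs.aestronglyMeasurable ?_
    filter_upwards with ω
    simp only [Pi.add_apply, Real.norm_eq_abs, abs_abs]
    exact hDbd n (X ω)
  set d : ℕ → ℝ := fun n => ∫ ω, |Fn n (X ω) - Fs (X ω)| ∂P with hddef
  have hd_nonneg : ∀ n, 0 ≤ d n := fun n => integral_nonneg fun ω => abs_nonneg _
  have hd0 : Tendsto d atTop (nhds 0) := by
    have h := tendsto_integral_of_dominated_convergence (μ := P)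
      (F := fun n ω => |Fn n (X ω) - Fs (X ω)|) (f := fun _ => (0 : ℝ))
      (fun ω => (2 * K + 2 * (K * K)) + |O ω| * (2 * K))
      (fun n => (((hFnm n).comp hXm).sub (hFsm.comp hXm)).abs.aestronglyMeasurable)
      ((integrable_const (2 * K + 2 * (K * K))).add (hO.abs.mul_const (2 * K)))
      (fun n => by
        filter_upwards with ω
        rw [Real.norm_eq_abs, abs_abs]
        exact hDbd n (X ω))
      (by
        filter_upwards with ω
        simpa using (hDto (X ω)).abs)
    simpa using h
  have hDT_int : ∀ n i, Integrable (fun ω => |Fn n (T i ω) - Fs (T i ω)|) P := fun n i =>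
    key_int (fun p => |Fn n p - Fs p|) ((hFnm n).sub hFsm).abs (hDX_int n) i
  have hDT_eq : ∀ n i, ∫ ω, |Fn n (T i ω) - Fs (T i ω)| ∂P = d n := fun n i =>
    key_eq (fun p => |Fn n p - Fs p|) ((hFnm n).sub hFsm).abs i
  -- the strong law of large numbers for Fs ∘ T
  have hFsT_int : ∀ i, Integrable (fun ω => Fs (T i ω)) P := key_int Fs hFsm hFsX_int
  have hpair : Pairwise (Function.onFun (IndepFun · · P) fun i ω => Fs (T i ω)) := by
    intro i j hij
    exact (hiid.indepFun hij).comp hFsm hFsm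
  have hident : ∀ i, IdentDistrib (fun ω => Fs (T i ω)) (fun ω => Fs (T 0 ω)) P P := by
    intro i
    have h : IdentDistrib (T i) (T 0) P P :=
      ⟨(hTm i).aemeasurable, (hTm 0).aemeasurable, by rw [hTlaw i, hTlaw 0]⟩
    exact h.comp hFsm
  have hSLLN := strong_law_ae (μ := P) (fun i ω => Fs (T i ω)) (hFsT_int 0) hpair hident
  -- the double-robustness identity
  have hmle : MeasurableSpace.comap C inferInstance ≤ _ := hC.comap_le
  have hCm : Measurable[MeasurableSpace.comap C inferInstance] C :=
    Measurable.of_comap_le le_rfl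
  have smC : ∀ {h : ℝ → ℝ}, Measurable h →
      StronglyMeasurable[MeasurableSpace.comap C inferInstance] fun ω => h (C ω) :=
    fun hh => (hh.comp hCm).stronglyMeasurable
  have bdd_int : ∀ (f : Ω → ℝ) (c : ℝ), Measurable f → (∀ ω, |f ω| ≤ c) → Integrable f P := by
    intro f c hf hc
    refine (integrable_const c).mono' hf.aestronglyMeasurable ?_
    filter_upwards with ω
    rw [Real.norm_eq_abs]; exact hc ω
  set I : Ω → ℝ := fun ω => if Ee ω = 1 then (1 : ℝ) else 0 with hIdef
  have hIm : Measurable I :=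
    Measurable.ite (measurableSet_eq_fun hEe measurable_const) measurable_const measurable_const
  have hI1 : ∀ ω, |I ω| ≤ 1 := by
    intro ω; by_cases h : Ee ω = 1 <;> simp [hIdef, h]
  have hI_int : Integrable I P := bdd_int I 1 hIm hI1
  have hτsC_int : Integrable (fun ω => τs (C ω)) P := bdd_int _ K (hτsm.comp hC) fun ω => hτsK _
  have hOπs_int : Integrable (fun ω => πs (C ω) * O ω) P := by
    refine Integrable.mono' (hO.abs.mul_const K) ((hπsm.comp hC).mul hOm).aestronglyMeasurable ?_
    filter_upwards with ω
    rw [Real.norm_eq_abs, abs_mul, mul_comm]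
    exact mul_le_mul_of_nonneg_left (hπsK _) (abs_nonneg _)
  have hθid : ∫ ω, Fs (X ω) ∂P = ∫ ω, I ω * τ (C ω) ∂P := by
    have hsplit : ∫ ω, Fs (X ω) ∂P
        = (∫ ω, I ω * τs (C ω) ∂P) + (∫ ω, O ω * πs (C ω) ∂P)
          - ∫ ω, τs (C ω) * πs (C ω) ∂P := by
      have hfun : (fun ω => Fs (X ω))
          = fun ω => (I ω * τs (C ω) + O ω * πs (C ω)) - τs (C ω) * πs (C ω) := rfl
      rw [hfun]
      have hi1X := 0
      have hi1 : Integrable (fun ω => I ω * τs (C ω)) P := by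
        refine bdd_int _ K (hIm.mul (hτsm.comp hC)) fun ω => ?_
        rw [abs_mul]
        calc |I ω| * |τs (C ω)| ≤ 1 * K := mul_le_mul (hI1 ω) (hτsK _) (abs_nonneg _) zero_le_one
          _ = K := one_mul K
      have hi2 : Integrable (fun ω => O ω * πs (C ω)) P := by simpa [mul_comm] using hOπs_int
      have hi3 : Integrable (fun ω => τs (C ω) * πs (C ω)) P := by
        refine bdd_int _ (K * K) ((hτsm.comp hC).mul (hπsm.comp hC)) fun ω => ?_
        rw [abs_mul]; exact mul_le_mul (hτsK _) (hπsK _) (abs_nonneg _) hK0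
      have hi12 : Integrable (fun ω => I ω * τs (C ω) + O ω * πs (C ω)) P := hi1.add hi2
      rw [integral_sub hi12 hi3, integral_add hi1 hi2]
    rw [hsplit]
    rcases hdr with hcase | hcase
    · -- the outcome regression is correctly specified
      have hae : ∀ᵐ ω ∂P, τs (C ω) = τ (C ω) :=
        (ae_map_iff hC.aemeasurable (measurableSet_eq_fun hτsm hτm)).mp hcase
      have e1 : ∫ ω, I ω * τs (C ω) ∂P = ∫ ω, I ω * τ (C ω) ∂P :=
        integral_congr_ae (by filter_upwards [hae] with ω h; rw [h])
      have e2 : ∫ ω, O ω * πs (C ω) ∂P = ∫ ω, τ (C ω) * πs (C ω) ∂P := by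
        calc ∫ ω, O ω * πs (C ω) ∂P = ∫ ω, πs (C ω) * O ω ∂P := by
              exact integral_congr_ae (Eventually.of_forall fun ω => mul_comm _ _)
          _ = ∫ ω, πs (C ω) * (P[O|MeasurableSpace.comap C inferInstance]) ω ∂P :=
              dr_pull_aux hmle _ O (smC hπsm) hOπs_int hO
          _ = ∫ ω, πs (C ω) * τ (C ω) ∂P := by
              refine integral_congr_ae ?_
              filter_upwards [hτver] with ω h
              rw [← h]
          _ = ∫ ω, τ (C ω) * πs (C ω) ∂P :=
              integral_congr_ae (Eventually.of_forall fun ω => mul_comm _ _)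
      have e3 : ∫ ω, τs (C ω) * πs (C ω) ∂P = ∫ ω, τ (C ω) * πs (C ω) ∂P :=
        integral_congr_ae (by filter_upwards [hae] with ω h; rw [h])
      rw [e1, e2, e3]; ring
    · -- the propensity score is correctly specified
      have hae : ∀ᵐ ω ∂P, πs (C ω) = π (C ω) :=
        (ae_map_iff hC.aemeasurable (measurableSet_eq_fun hπsm hπm)).mp hcase
      have hτsI_int : Integrable (fun ω => τs (C ω) * I ω) P := by
        refine bdd_int _ K ((hτsm.comp hC).mul hIm) fun ω => ?_
        rw [abs_mul]
        calc |τs (C ω)| * |I ω| ≤ K * 1 := mul_le_mul (hτsK _) (hI1 ω) (abs_nonneg _) hK0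
          _ = K := mul_one K
      have e1 : ∫ ω, I ω * τs (C ω) ∂P = ∫ ω, τs (C ω) * πs (C ω) ∂P := by
        calc ∫ ω, I ω * τs (C ω) ∂P = ∫ ω, τs (C ω) * I ω ∂P :=
              integral_congr_ae (Eventually.of_forall fun ω => mul_comm _ _)
          _ = ∫ ω, τs (C ω) * (P[I|MeasurableSpace.comap C inferInstance]) ω ∂P := dr_pull_aux hmle _ I (smC hτsm) hτsI_int hI_int
          _ = ∫ ω, τs (C ω) * π (C ω) ∂P := by
              refine integral_congr_ae ?_
              filter_upwards [hπver] with ω h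
              rw [← h]
          _ = ∫ ω, τs (C ω) * πs (C ω) ∂P := by
              refine integral_congr_ae ?_
              filter_upwards [hae] with ω h
              rw [h]
      have hπO_int : Integrable (fun ω => π (C ω) * O ω) P := by
        refine Integrable.mono' hO.abs ((hπm.comp hC).mul hOm).aestronglyMeasurable ?_
        filter_upwards with ω
        rw [Real.norm_eq_abs, abs_mul]
        have h01 := hπ01 (C ω)
        have : |π (C ω)| ≤ 1 := abs_le.mpr ⟨by linarith [h01.1], h01.2⟩
        calc |π (C ω)| * |O ω| ≤ 1 * |O ω| :=
              mul_le_mul_of_nonneg_right this (abs_nonneg _)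
          _ = |O ω| := one_mul _
      have hτI_int : Integrable (fun ω => τ (C ω) * I ω) P := by
        refine Integrable.mono' hτint.abs ((hτm.comp hC).mul hIm).aestronglyMeasurable ?_
        filter_upwards with ω
        rw [Real.norm_eq_abs, abs_mul]
        calc |τ (C ω)| * |I ω| ≤ |τ (C ω)| * 1 :=
              mul_le_mul_of_nonneg_left (hI1 ω) (abs_nonneg _)
          _ = |τ (C ω)| := mul_one _
      have e2 : ∫ ω, O ω * πs (C ω) ∂P = ∫ ω, I ω * τ (C ω) ∂P := by
        calc ∫ ω, O ω * πs (C ω) ∂P = ∫ ω, π (C ω) * O ω ∂P := by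
              refine integral_congr_ae ?_
              filter_upwards [hae] with ω h
              rw [mul_comm, h]
          _ = ∫ ω, π (C ω) * (P[O|MeasurableSpace.comap C inferInstance]) ω ∂P := dr_pull_aux hmle _ O (smC hπm) hπO_int hO
          _ = ∫ ω, π (C ω) * τ (C ω) ∂P := by
              refine integral_congr_ae ?_
              filter_upwards [hτver] with ω h
              rw [← h]
          _ = ∫ ω, τ (C ω) * (P[I|MeasurableSpace.comap C inferInstance]) ω ∂P := by
              refine integral_congr_ae ?_
              filter_upwards [hπver] with ω h
              rw [h]; exact mul_comm _ _
          _ = ∫ ω, τ (C ω) * I ω ∂P :=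
              (dr_pull_aux hmle _ I (smC hτm) hτI_int hI_int).symm
          _ = ∫ ω, I ω * τ (C ω) ∂P :=
              integral_congr_ae (Eventually.of_forall fun ω => mul_comm _ _)
      rw [e1, e2]; ring
    -- limit value of the SLLN
  have hlimT : ∫ ω, Fs (T 0 ω) ∂P = ∫ ω, I ω * τ (C ω) ∂P := (key_eq Fs hFsm 0).trans hθid
  set A : ℕ → Ω → ℝ := fun n ω => (n : ℝ)⁻¹ * ∑ i ∈ Finset.range n, Fs (T i ω) with hAdef
  have hAm : ∀ n, Measurable (A n) := fun n =>
    (Finset.measurable_sum _ fun i _ => hFsm.comp (hTm i)).const_mul _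
  have hAae : ∀ᵐ ω ∂P, Tendsto (fun n => A n ω) atTop (nhds (∫ ω, I ω * τ (C ω) ∂P)) := by
    filter_upwards [hSLLN] with ω hω
    rw [← hlimT]
    simpa [smul_eq_mul, hAdef] using hω
  have hAtm : TendstoInMeasure P A atTop (fun _ => ∫ ω, I ω * τ (C ω) ∂P) :=
    tendstoInMeasure_of_tendsto_ae (fun n => (hAm n).aestronglyMeasurable) hAae
  have hfeq : ∀ (n : ℕ) (ω : Ω), (n : ℝ)⁻¹ * ∑ i ∈ Finset.range n,
      ((if Ei i ω = 1 then (1 : ℝ) else 0) * τn n (Ci i ω)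
        + Oi i ω * πn n (Ci i ω) - τn n (Ci i ω) * πn n (Ci i ω))
      = A n ω + (n : ℝ)⁻¹ * ∑ i ∈ Finset.range n, (Fn n (T i ω) - Fs (T i ω)) := by
    intro n ω
    simp only [hAdef]
    rw [← mul_add, ← Finset.sum_add_distrib]
    congr 1
    refine Finset.sum_congr rfl fun i _ => ?_
    simp only [hFndef, hFsdef, hTdef, hinddef]
    ring
  set Bp : ℕ → Ω → ℝ :=
    fun n ω => (n : ℝ)⁻¹ * ∑ i ∈ Finset.range n, |Fn n (T i ω) - Fs (T i ω)| with hBpdef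
  have hBp_nonneg : ∀ n ω, 0 ≤ Bp n ω := fun n ω =>
    mul_nonneg (by positivity) (Finset.sum_nonneg fun i _ => abs_nonneg _)
  have hBp_int : ∀ n, Integrable (Bp n) P := fun n =>
    (integrable_finset_sum _ fun i _ => hDT_int n i).const_mul _
  have hBp_ile : ∀ n, ∫ ω, Bp n ω ∂P ≤ d n := by
    intro n
    have heq : ∫ ω, Bp n ω ∂P = (n : ℝ)⁻¹ * ∑ _i ∈ Finset.range n, d n := by
      simp only [hBpdef]
      rw [integral_const_mul, integral_finset_sum _ fun i _ => hDT_int n i]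
      congr 1
      exact Finset.sum_congr rfl fun i _ => hDT_eq n i
    rw [heq, Finset.sum_const, Finset.card_range, nsmul_eq_mul]
    rcases Nat.eq_zero_or_pos n with h0 | hpos
    · subst h0; simpa using hd_nonneg 0
    · have hn : (0 : ℝ) < n := by exact_mod_cast hpos
      rw [← mul_assoc, inv_mul_cancel₀ hn.ne', one_mul]
  have hIτ : (∫ ω, I ω * τ (C ω) ∂P)
      = ∫ ω, (if Ee ω = 1 then (1 : ℝ) else 0) * τ (C ω) ∂P := by
    simp only [hIdef]
  rw [tendstoInMeasure_iff_dist]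
  intro ε hε
  have hε2 : 0 < ε / 2 := by positivity
  have hA2 := tendstoInMeasure_iff_dist.mp hAtm (ε / 2) hε2
  have hB2 : Tendsto (fun n => P {ω | ε / 2 ≤ Bp n ω}) atTop (nhds 0) := by
    have hbound : ∀ n, (P {ω | ε / 2 ≤ Bp n ω}).toReal ≤ d n / (ε / 2) := by
      intro n
      have hmk := mul_meas_ge_le_integral_of_nonneg
        (ae_of_all _ fun ω => hBp_nonneg n ω) (hBp_int n) (ε / 2)
      rw [measureReal_def] at hmk
      have h2 := hBp_ile n
      rw [le_div_iff₀ hε2]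
      nlinarith [ENNReal.toReal_nonneg (a := P {ω | ε / 2 ≤ Bp n ω})]
    have htd : Tendsto (fun n => d n / (ε / 2)) atTop (nhds 0) := by
      simpa using hd0.div_const (ε / 2)
    have htends : Tendsto (fun n => (P {ω | ε / 2 ≤ Bp n ω}).toReal) atTop (nhds 0) :=
      squeeze_zero (fun n => ENNReal.toReal_nonneg) hbound htd
    have hne : ∀ n, P {ω | ε / 2 ≤ Bp n ω} ≠ ⊤ := fun n => measure_ne_top _ _
    rw [← ENNReal.tendsto_toReal_iff hne ENNReal.zero_ne_top]
    simpa using htends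
  refine tendsto_of_tendsto_of_tendsto_of_le_of_le (h := fun n =>
      P {ω | ε / 2 ≤ dist (A n ω) (∫ ω, I ω * τ (C ω) ∂P)} + P {ω | ε / 2 ≤ Bp n ω})
    tendsto_const_nhds ?_ (fun n => zero_le) ?_
  · simpa using hA2.add hB2
  · intro n
    refine le_trans (measure_mono ?_)
      (measure_union_le {ω | ε / 2 ≤ dist (A n ω) (∫ ω, I ω * τ (C ω) ∂P)}
        {ω | ε / 2 ≤ Bp n ω})
    intro ω hω
    simp only [Set.mem_setOf_eq] at hω
    simp only [Set.mem_union, Set.mem_setOf_eq]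
    by_contra hcon
    push_neg at hcon
    obtain ⟨h1, h2⟩ := hcon
    rw [Real.dist_eq] at hω h1
    rw [← hIτ, hfeq n ω] at hω
    have hS : |(n : ℝ)⁻¹ * ∑ i ∈ Finset.range n, (Fn n (T i ω) - Fs (T i ω))| ≤ Bp n ω := by
      simp only [hBpdef]
      rw [abs_mul, abs_inv, Nat.abs_cast]
      exact mul_le_mul_of_nonneg_left (Finset.abs_sum_le_sum_abs _ _) (by positivity)
    have htri : |A n ω + (n : ℝ)⁻¹ * ∑ i ∈ Finset.range n, (Fn n (T i ω) - Fs (T i ω))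
        - ∫ ω, I ω * τ (C ω) ∂P|
        ≤ |A n ω - ∫ ω, I ω * τ (C ω) ∂P|
          + |(n : ℝ)⁻¹ * ∑ i ∈ Finset.range n, (Fn n (T i ω) - Fs (T i ω))| := by
      have habs := abs_add_le (A n ω - ∫ ω, I ω * τ (C ω) ∂P)
        ((n : ℝ)⁻¹ * ∑ i ∈ Finset.range n, (Fn n (T i ω) - Fs (T i ω)))
      have hrw : A n ω + (n : ℝ)⁻¹ * ∑ i ∈ Finset.range n, (Fn n (T i ω) - Fs (T i ω))
          - ∫ ω, I ω * τ (C ω) ∂P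
          = (A n ω - ∫ ω, I ω * τ (C ω) ∂P)
            + (n : ℝ)⁻¹ * ∑ i ∈ Finset.range n, (Fn n (T i ω) - Fs (T i ω)) := by ring
      rw [hrw]
      exact habs
    linarith
end
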